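/- Let {w(t)} ⊂ ℝ^J_+ satisfy w_j(t+1) = max(w_j(t) + (1/V)g_j(y(t)), 0) for all t and j. If each g_j is convex on a convex set Y containing all y(t), then for every T ≥ 1 and every j: g_j(ȳ(T)) ≤ (V/T)(w_j(T) - w_j(0)), where ȳ(T) = (1/T)∑_{t=0}^{T-1} y(t). -/
import Mathlib


theorem stmt_3 (I J : ℕ) (V : ℝ) (hV : 0 < V)
    (Y : Set (EuclideanSpace ℝ (Fin I))) (hY : Convex ℝ Y)
    (g : Fin J → EuclideanSpace ℝ (Fin I) → ℝ)
    (hg : ∀ j, ConvexOn ℝ Y (g j))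
    (y : ℕ → EuclideanSpace ℝ (Fin I)) (hy : ∀ t, y t ∈ Y)
    (w : ℕ → Fin J → ℝ)
    (hw : ∀ t j, w (t + 1) j = max (w t j + V⁻¹ * g j (y t)) 0) :
    ∀ T : ℕ, 1 ≤ T → ∀ j,
      g j ((T : ℝ)⁻¹ • ∑ t ∈ Finset.range T, y t) ≤ (V / (T : ℝ)) * (w T j - w 0 j) := by
  intro T hT j
  have hTpos : (0 : ℝ) < T := by exact_mod_cast hT
  -- Jensen
  have jensen : g j ((T : ℝ)⁻¹ • ∑ t ∈ Finset.range T, y t)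
      ≤ ∑ t ∈ Finset.range T, (T : ℝ)⁻¹ * g j (y t) := by
    have h := (hg j).map_sum_le (t := Finset.range T) (w := fun _ => (T : ℝ)⁻¹)
      (p := fun t => y t) (fun i _ => by positivity)
      (by simp [Finset.sum_const, mul_inv_cancel₀ hTpos.ne']) (fun i _ => hy i)
    simpa [Finset.smul_sum] using h
  -- telescoping bound
  have step : ∀ t, V⁻¹ * g j (y t) ≤ w (t + 1) j - w t j := by
    intro t
    have := le_max_left (w t j + V⁻¹ * g j (y t)) 0
    rw [← hw t j] at this
    linarith
  have tele : ∑ t ∈ Finset.range T, V⁻¹ * g j (y t) ≤ w T j - w 0 j := by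
    calc ∑ t ∈ Finset.range T, V⁻¹ * g j (y t)
        ≤ ∑ t ∈ Finset.range T, (w (t + 1) j - w t j) :=
          Finset.sum_le_sum fun t _ => step t
      _ = w T j - w 0 j := Finset.sum_range_sub (fun t => w t j) T
  have hsum : ∑ t ∈ Finset.range T, g j (y t) ≤ V * (w T j - w 0 j) := by
    have := mul_le_mul_of_nonneg_left tele hV.le
    rw [Finset.mul_sum] at this
    calc ∑ t ∈ Finset.range T, g j (y t)
        = ∑ t ∈ Finset.range T, V * (V⁻¹ * g j (y t)) := by
          simp [← mul_assoc, mul_inv_cancel₀ hV.ne']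
      _ ≤ V * (w T j - w 0 j) := this
  calc g j ((T : ℝ)⁻¹ • ∑ t ∈ Finset.range T, y t)
      ≤ ∑ t ∈ Finset.range T, (T : ℝ)⁻¹ * g j (y t) := jensen
    _ = (T : ℝ)⁻¹ * ∑ t ∈ Finset.range T, g j (y t) := by rw [Finset.mul_sum]
    _ ≤ (T : ℝ)⁻¹ * (V * (w T j - w 0 j)) := by
        exact mul_le_mul_of_nonneg_left hsum (by positivity)
    _ = (V / (T : ℝ)) * (w T j - w 0 j) := by ring
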